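/- arXiv:2510.02477 — 2 statements merged into one kernel-verified Lean document; each statement's English description precedes it below -/
import Mathlib

section
/- Let m > 1 and F(z) = (1 + |z|^m)^{1/m} for z ∈ R^n with z ≠ 0 when m < 2. Then for all ξ ∈ R^n: min{m−1,1} |z|^{m−2} |ξ|^2 / (1+|z|^m)^{2−1/m} ≤ ⟨∂_{zz}F(z)ξ, ξ⟩ ≤ max{m−1,1} |z|^{m−2} |ξ|^2 / (1+|z|^m)^{1−1/m}. -/
set_option synthInstance.maxHeartbeats 1000000
set_option maxHeartbeats 1000000

open Real Filter Asymptotics Topology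

section MahAux

variable {E : Type*} [NormedAddCommGroup E] [InnerProductSpace ℝ E]

private noncomputable def mah_ipm : E →L[ℝ] E →L[ℝ] ℝ := innerSL ℝ

private lemma mah_ipm_apply (x y : E) : (mah_ipm x) y = inner ℝ x y := rfl

omit [InnerProductSpace ℝ E] in
private lemma mah_norm_sq_rpow (w : E) {a b : ℝ} (hab : 2 * a = b) :
    ((‖w‖ ^ 2 : ℝ)) ^ a = ‖w‖ ^ b := by
  rw [← hab, ← Real.rpow_natCast ‖w‖ 2, ← Real.rpow_mul (norm_nonneg w)]
  norm_num

private lemma mah_hasFDerivAt_F (m : ℝ) (hm : 1 < m) (w : E) (hw : w ≠ 0 ∨ 2 ≤ m) :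
    HasFDerivAt (fun w : E => (1 + ‖w‖ ^ m) ^ (1 / m))
      (((1 + ‖w‖ ^ m) ^ (1 / m - 1) * ‖w‖ ^ (m - 2)) • innerSL ℝ w) w := by
  have hm0 : m ≠ 0 := by positivity
  have hN : HasFDerivAt (fun w : E => (‖w‖ ^ 2 : ℝ)) (2 • innerSL ℝ w) w :=
    (hasStrictFDerivAt_norm_sq w).hasFDerivAt
  set u : ℝ := ‖w‖ ^ 2 with hu
  have hu0 : 0 ≤ u := by positivity
  have hinner : HasDerivAt (fun t : ℝ => 1 + t ^ (m / 2)) ((m / 2) * u ^ (m / 2 - 1)) u := by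
    have := Real.hasDerivAt_rpow_const (x := u) (p := m / 2)
      (by rcases hw with h | h
          · exact Or.inl (pow_ne_zero 2 (norm_ne_zero_iff.2 h))
          · exact Or.inr (by linarith))
    simpa using (this.const_add 1)
  have houter : HasDerivAt (fun s : ℝ => s ^ (1 / m))
      ((1 / m) * (1 + u ^ (m / 2)) ^ (1 / m - 1)) (1 + u ^ (m / 2)) := by
    have hpos : (0 : ℝ) < 1 + u ^ (m / 2) := by positivity
    exact Real.hasDerivAt_rpow_const (Or.inl hpos.ne')
  have hg : HasDerivAt (fun t : ℝ => (1 + t ^ (m / 2)) ^ (1 / m))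
      ((1 / m) * (1 + u ^ (m / 2)) ^ (1 / m - 1) * ((m / 2) * u ^ (m / 2 - 1))) u := by
    have h := houter.comp u hinner; exact h
  have hcomp := hg.comp_hasFDerivAt w hN
  have hfun : ((fun t : ℝ => (1 + t ^ (m / 2)) ^ (1 / m)) ∘ fun w : E => (‖w‖ ^ 2 : ℝ))
      = fun w : E => (1 + ‖w‖ ^ m) ^ (1 / m) := by
    funext v
    simp only [Function.comp_apply, mah_norm_sq_rpow v (by ring : 2 * (m / 2) = m)]
  rw [hfun] at hcomp
  refine hcomp.congr_fderiv ?_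
  rw [hu, mah_norm_sq_rpow w (by ring : 2 * (m / 2 - 1) = m - 2),
    mah_norm_sq_rpow w (by ring : 2 * (m / 2) = m)]
  ext ξ
  simp only [ContinuousLinearMap.coe_smul', Pi.smul_apply, smul_eq_mul,
    ContinuousLinearMap.smul_apply]
  push_cast
  field_simp
  ring

private lemma mah_hasFDerivAt_G (m : ℝ) (hm : 1 < m) (z : E) (hz : z ≠ 0) :
    HasFDerivAt (fun w : E => ((1 + ‖w‖ ^ m) ^ (1 / m - 1) * ‖w‖ ^ (m - 2)) • innerSL ℝ w)
      ((((1 + ‖z‖ ^ m) ^ (1 / m - 1) * ‖z‖ ^ (m - 2)) • (mah_ipm : E →L[ℝ] E →L[ℝ] ℝ)) +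
        ((2 * ((1 / m - 1) * (1 + ‖z‖ ^ m) ^ (1 / m - 2) * ((m / 2) * ‖z‖ ^ (m - 2)) * ‖z‖ ^ (m - 2)
            + (1 + ‖z‖ ^ m) ^ (1 / m - 1) * ((m / 2 - 1) * ‖z‖ ^ (m - 4)))) •
          innerSL ℝ z).smulRight (innerSL ℝ z)) z := by
  have hm0 : m ≠ 0 := by positivity
  have hN : HasFDerivAt (fun w : E => (‖w‖ ^ 2 : ℝ)) (2 • innerSL ℝ z) z :=
    (hasStrictFDerivAt_norm_sq z).hasFDerivAt
  set u : ℝ := ‖z‖ ^ 2 with hu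
  have hu0 : u ≠ 0 := pow_ne_zero 2 (norm_ne_zero_iff.2 hz)
  have hupos : 0 < u := by positivity
  -- derivative of φ(t) = (1+t^{m/2})^{1/m-1} * t^{m/2-1} at u
  have hinner : HasDerivAt (fun t : ℝ => 1 + t ^ (m / 2)) ((m / 2) * u ^ (m / 2 - 1)) u := by
    simpa using ((Real.hasDerivAt_rpow_const (x := u) (p := m / 2) (Or.inl hu0)).const_add 1)
  have hpos : (0 : ℝ) < 1 + u ^ (m / 2) := by positivity
  have h1 : HasDerivAt (fun t : ℝ => (1 + t ^ (m / 2)) ^ (1 / m - 1))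
      ((1 / m - 1) * (1 + u ^ (m / 2)) ^ (1 / m - 1 - 1) * ((m / 2) * u ^ (m / 2 - 1))) u :=
    by have h := (Real.hasDerivAt_rpow_const (x := 1 + u ^ (m / 2)) (p := 1 / m - 1)
      (Or.inl hpos.ne')).comp u hinner; exact h
  have h2 : HasDerivAt (fun t : ℝ => t ^ (m / 2 - 1)) ((m / 2 - 1) * u ^ (m / 2 - 1 - 1)) u :=
    Real.hasDerivAt_rpow_const (Or.inl hu0)
  have hφ : HasDerivAt (fun t : ℝ => (1 + t ^ (m / 2)) ^ (1 / m - 1) * t ^ (m / 2 - 1)) _ u :=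
    h1.mul h2
  have hc0 := hφ.comp_hasFDerivAt z hN
  have hfun : ((fun t : ℝ => (1 + t ^ (m / 2)) ^ (1 / m - 1) * t ^ (m / 2 - 1)) ∘
        fun w : E => (‖w‖ ^ 2 : ℝ))
      = fun w : E => (1 + ‖w‖ ^ m) ^ (1 / m - 1) * ‖w‖ ^ (m - 2) := by
    funext v
    simp only [Function.comp_apply, mah_norm_sq_rpow v (by ring : 2 * (m / 2) = m),
      mah_norm_sq_rpow v (by ring : 2 * (m / 2 - 1) = m - 2)]
  rw [hfun] at hc0
  have hf : HasFDerivAt (fun w : E => innerSL ℝ w) (mah_ipm : E →L[ℝ] E →L[ℝ] ℝ) z :=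
    (mah_ipm (E := E)).hasFDerivAt
  have hD := hc0.smul hf
  refine hD.congr_fderiv ?_
  -- identify the two continuous linear maps
  ext ξ η
  simp only [ContinuousLinearMap.add_apply, ContinuousLinearMap.coe_smul', Pi.smul_apply,
    ContinuousLinearMap.smulRight_apply, ContinuousLinearMap.smul_apply, smul_eq_mul,
    innerSL_apply_apply]
  rw [hu, mah_norm_sq_rpow z (by ring : 2 * (m / 2) = m),
    mah_norm_sq_rpow z (by ring : 2 * (m / 2 - 1) = m - 2),
    mah_norm_sq_rpow z (by ring : 2 * (m / 2 - 1 - 1) = m - 4),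
    (by ring : 1 / m - 1 - 1 = 1 / m - 2)]
  rw [show (2 : ℕ) • (inner ℝ z ξ : ℝ) = 2 * inner ℝ z ξ by simp]
  ring

private lemma mah_G_zero (m : ℝ) (hm : 2 < m) :
    HasFDerivAt (fun w : E => ((1 + ‖w‖ ^ m) ^ (1 / m - 1) * ‖w‖ ^ (m - 2)) • innerSL ℝ w)
      (0 : E →L[ℝ] E →L[ℝ] ℝ) (0 : E) := by
  rw [hasFDerivAt_iff_isLittleO_nhds_zero]
  have h0 : ((1 + ‖(0:E)‖ ^ m) ^ (1 / m - 1) * ‖(0:E)‖ ^ (m - 2)) • innerSL ℝ (0:E) = 0 := by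
    simp
  rw [isLittleO_iff]
  intro c hc
  have ht : Tendsto (fun h : E => ‖h‖ ^ (m - 2)) (𝓝 0) (𝓝 0) := by
    have hc1 : ContinuousAt (fun t : ℝ => t ^ (m - 2)) 0 :=
      Real.continuousAt_rpow_const 0 (m - 2) (Or.inr (by linarith))
    have := hc1.tendsto
    rw [Real.zero_rpow (by linarith : m - 2 ≠ 0)] at this
    simpa [Function.comp_def] using this.comp tendsto_norm_zero
  filter_upwards [ht.eventually (eventually_le_nhds hc)] with h hh
  have hb : (0:ℝ) ≤ (1 + ‖h‖ ^ m) ^ (1 / m - 1) * ‖h‖ ^ (m - 2) :=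
    mul_nonneg (Real.rpow_nonneg (by positivity) _) (Real.rpow_nonneg (norm_nonneg _) _)
  have hle1 : (1 + ‖h‖ ^ m) ^ (1 / m - 1) ≤ 1 := by
    apply Real.rpow_le_one_of_one_le_of_nonpos
    · have : (0:ℝ) ≤ ‖h‖ ^ m := Real.rpow_nonneg (norm_nonneg _) _
      linarith
    · have : 1 / m < 1 := by
        rw [div_lt_one (by linarith)]; linarith
      linarith
  calc ‖((1 + ‖(0 + h : E)‖ ^ m) ^ (1 / m - 1) * ‖(0 + h : E)‖ ^ (m - 2)) • innerSL ℝ (0 + h : E)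
        - ((1 + ‖(0:E)‖ ^ m) ^ (1 / m - 1) * ‖(0:E)‖ ^ (m - 2)) • innerSL ℝ (0:E)
        - (0 : E →L[ℝ] E →L[ℝ] ℝ) h‖
      = ((1 + ‖h‖ ^ m) ^ (1 / m - 1) * ‖h‖ ^ (m - 2)) * ‖h‖ := by
        rw [h0, zero_add]
        rw [show ∀ A : E →L[ℝ] ℝ, A - 0 - (0 : E →L[ℝ] E →L[ℝ] ℝ) h = A by
          intro A; simp]
        rw [norm_smul ((1 + ‖h‖ ^ m) ^ (1 / m - 1) * ‖h‖ ^ (m - 2)) ((innerSL ℝ) h),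
          Real.norm_eq_abs, abs_of_nonneg hb, innerSL_apply_norm]
    _ ≤ (1 * ‖h‖ ^ (m - 2)) * ‖h‖ := by
        apply mul_le_mul_of_nonneg_right _ (norm_nonneg _)
        exact mul_le_mul_of_nonneg_right hle1 (Real.rpow_nonneg (norm_nonneg _) _)
    _ ≤ c * ‖h‖ := by
        rw [one_mul]
        exact mul_le_mul_of_nonneg_right hh (norm_nonneg _)

/-- For `m = 2`, the map `G` is differentiable at `0` with derivative the inner product map. -/

private lemma mah_G_two :
    HasFDerivAt (fun w : E => ((1 + ‖w‖ ^ (2:ℝ)) ^ (1 / (2:ℝ) - 1) * ‖w‖ ^ ((2:ℝ) - 2)) • innerSL ℝ w)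
      (mah_ipm : E →L[ℝ] E →L[ℝ] ℝ) (0 : E) := by
  have hfun : (fun w : E => ((1 + ‖w‖ ^ (2:ℝ)) ^ (1 / (2:ℝ) - 1) * ‖w‖ ^ ((2:ℝ) - 2)) • innerSL ℝ w)
      = fun w : E => ((1 + (‖w‖ ^ 2 : ℝ)) ^ (1 / (2:ℝ) - 1)) • innerSL ℝ w := by
    funext w
    rw [show ((2:ℝ) - 2) = 0 by norm_num, Real.rpow_zero, mul_one,
      ← Real.rpow_natCast ‖w‖ 2]
    norm_num
  rw [hfun]
  have hN : HasFDerivAt (fun w : E => (‖w‖ ^ 2 : ℝ)) (2 • innerSL ℝ (0:E)) (0:E) :=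
    (hasStrictFDerivAt_norm_sq (0:E)).hasFDerivAt
  have hφ : HasDerivAt (fun t : ℝ => (1 + t) ^ (1 / (2:ℝ) - 1))
      ((1 / 2 - 1) * ((1:ℝ) + 0) ^ (1 / (2:ℝ) - 1 - 1)) (0:ℝ) := by
    have h1 : HasDerivAt (fun t : ℝ => 1 + t) 1 (0:ℝ) := (hasDerivAt_id _).const_add 1
    have h2 := Real.hasDerivAt_rpow_const (x := (1:ℝ) + 0) (p := 1 / (2:ℝ) - 1)
      (Or.inl (by norm_num))
    simpa [Function.comp_def] using h2.comp _ h1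
  have hc := hφ.comp_hasFDerivAt_of_eq (0:E) hN (by simp)
  have hf : HasFDerivAt (fun w : E => innerSL ℝ w) (mah_ipm : E →L[ℝ] E →L[ℝ] ℝ) (0:E) :=
    (mah_ipm (E := E)).hasFDerivAt
  have hD := hc.smul hf
  refine hD.congr_fderiv ?_
  ext ξ η
  simp [mah_ipm_apply]

end MahAux

private lemma mah_key (m r X s : ℝ) (hm : 1 < m) (hr : 0 < r) (hX : 0 ≤ X)
    (hs0 : 0 ≤ s) (hs : s ≤ r ^ 2 * X) :
    min (m - 1) 1 * r ^ (m - 2) * X / (1 + r ^ m) ^ (2 - 1 / m) ≤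
      (1 + r ^ m) ^ (1 / m - 1) * r ^ (m - 2) * X +
      2 * ((1 / m - 1) * (1 + r ^ m) ^ (1 / m - 2) * ((m / 2) * r ^ (m - 2)) * r ^ (m - 2)
          + (1 + r ^ m) ^ (1 / m - 1) * ((m / 2 - 1) * r ^ (m - 4))) * s ∧
    (1 + r ^ m) ^ (1 / m - 1) * r ^ (m - 2) * X +
      2 * ((1 / m - 1) * (1 + r ^ m) ^ (1 / m - 2) * ((m / 2) * r ^ (m - 2)) * r ^ (m - 2)
          + (1 + r ^ m) ^ (1 / m - 1) * ((m / 2 - 1) * r ^ (m - 4))) * s ≤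
      max (m - 1) 1 * r ^ (m - 2) * X / (1 + r ^ m) ^ (1 - 1 / m) := by
  have hm0 : m ≠ 0 := by positivity
  have hrm : (0:ℝ) ≤ r ^ m := Real.rpow_nonneg hr.le m
  have hK0 : (0:ℝ) < 1 + r ^ m := by linarith
  have hrm2 : (0:ℝ) ≤ r ^ (m - 2) := Real.rpow_nonneg hr.le _
  have hrm4 : (0:ℝ) ≤ r ^ (m - 4) := Real.rpow_nonneg hr.le _
  have hC : (0:ℝ) ≤ (1 + r ^ m) ^ (1 / m - 2) := Real.rpow_nonneg hK0.le _
  have e1 : r ^ (m - 2) * r ^ (m - 2) = r ^ (m - 4) * r ^ m := by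
    rw [← Real.rpow_add hr, ← Real.rpow_add hr]; ring_nf
  have e2 : (1 + r ^ m) ^ (1 / m - 1) = (1 + r ^ m) ^ (1 / m - 2) * (1 + r ^ m) := by
    rw [← Real.rpow_add_one hK0.ne']; congr 1; ring
  have e3 : r ^ (m - 4) * r ^ (2:ℕ) = r ^ (m - 2) := by
    rw [← Real.rpow_natCast r 2, ← Real.rpow_add hr]; congr 1; push_cast; ring
  have hdiv1 : min (m - 1) 1 * r ^ (m - 2) * X / (1 + r ^ m) ^ (2 - 1 / m)
      = (1 + r ^ m) ^ (1 / m - 2) * (min (m - 1) 1 * (r ^ (m - 2) * X)) := by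
    rw [div_eq_mul_inv, ← Real.rpow_neg hK0.le, (by ring : -(2 - 1/m) = 1/m - 2)]; ring
  have hdiv2 : max (m - 1) 1 * r ^ (m - 2) * X / (1 + r ^ m) ^ (1 - 1 / m)
      = (1 + r ^ m) ^ (1 / m - 2) * (max (m - 1) 1 * (r ^ (m - 2) * X) * (1 + r ^ m)) := by
    rw [div_eq_mul_inv, ← Real.rpow_neg hK0.le, (by ring : -(1 - 1/m) = 1/m - 1), e2]; ring
  have hQ : (1 + r ^ m) ^ (1 / m - 1) * r ^ (m - 2) * X +
      2 * ((1 / m - 1) * (1 + r ^ m) ^ (1 / m - 2) * ((m / 2) * r ^ (m - 2)) * r ^ (m - 2)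
          + (1 + r ^ m) ^ (1 / m - 1) * ((m / 2 - 1) * r ^ (m - 4))) * s
      = (1 + r ^ m) ^ (1 / m - 2) *
        (r ^ (m - 4) * ((m - 2) - r ^ m) * s + (1 + r ^ m) * (r ^ (m - 2) * X)) := by
    rw [e2]
    linear_combination ((m * (1 / m) - m) * (1 + r ^ m) ^ (1 / m - 2) * s) * e1 +
      ((1 + r ^ m) ^ (1 / m - 2) * r ^ (m - 4) * r ^ m * s) * (mul_inv_cancel₀ hm0)
  have hmin0 : (0:ℝ) ≤ min (m - 1) 1 := le_min (by linarith) zero_le_one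
  have hmin1 : min (m - 1) 1 ≤ 1 := min_le_right _ _
  have hminm : min (m - 1) 1 ≤ m - 1 := min_le_left _ _
  have hmax1 : (1:ℝ) ≤ max (m - 1) 1 := le_max_right _ _
  have hmaxm : m - 1 ≤ max (m - 1) 1 := le_max_left _ _
  have hrx : (0:ℝ) ≤ r ^ (m - 2) * X := mul_nonneg hrm2 hX
  have h1 : r ^ (m - 4) * ((m - 2) - r ^ m) * (r ^ 2 * X)
      = ((m - 2) - r ^ m) * (r ^ (m - 2) * X) := by rw [← e3]; ring
  have hmax0 : (0:ℝ) ≤ max (m - 1) 1 := by linarith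
  rw [hQ, hdiv1, hdiv2]
  constructor
  · apply mul_le_mul_of_nonneg_left _ hC
    rcases le_or_gt (r ^ m) (m - 2) with h | h
    · have h2 : (0:ℝ) ≤ r ^ (m - 4) * ((m - 2) - r ^ m) * s :=
        mul_nonneg (mul_nonneg hrm4 (by linarith)) hs0
      have f1 : min (m - 1) 1 * (r ^ (m - 2) * X) ≤ 1 * (r ^ (m - 2) * X) :=
        mul_le_mul_of_nonneg_right hmin1 hrx
      have f2 : (0:ℝ) ≤ r ^ m * (r ^ (m - 2) * X) := mul_nonneg hrm hrx
      linarith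
    · have hcoef : r ^ (m - 4) * ((m - 2) - r ^ m) ≤ 0 :=
        mul_nonpos_of_nonneg_of_nonpos hrm4 (by linarith)
      have h2 : r ^ (m - 4) * ((m - 2) - r ^ m) * (r ^ 2 * X)
          ≤ r ^ (m - 4) * ((m - 2) - r ^ m) * s := mul_le_mul_of_nonpos_left hs hcoef
      have f1 : min (m - 1) 1 * (r ^ (m - 2) * X) ≤ (m - 1) * (r ^ (m - 2) * X) :=
        mul_le_mul_of_nonneg_right hminm hrx
      linarith [h1 ▸ h2]
  · apply mul_le_mul_of_nonneg_left _ hC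
    rcases le_or_gt (r ^ m) (m - 2) with h | h
    · have hcoef : 0 ≤ r ^ (m - 4) * ((m - 2) - r ^ m) := mul_nonneg hrm4 (by linarith)
      have h2 : r ^ (m - 4) * ((m - 2) - r ^ m) * s
          ≤ r ^ (m - 4) * ((m - 2) - r ^ m) * (r ^ 2 * X) :=
        mul_le_mul_of_nonneg_left hs hcoef
      have f1 : (m - 1) * (r ^ (m - 2) * X) ≤ max (m - 1) 1 * (r ^ (m - 2) * X) :=
        mul_le_mul_of_nonneg_right hmaxm hrx
      have f2 : max (m - 1) 1 * (r ^ (m - 2) * X)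
          ≤ max (m - 1) 1 * (r ^ (m - 2) * X) * (1 + r ^ m) :=
        le_mul_of_one_le_right (mul_nonneg hmax0 hrx) (by linarith)
      linarith [h1 ▸ h2]
    · have h2 : r ^ (m - 4) * ((m - 2) - r ^ m) * s ≤ 0 :=
        mul_nonpos_of_nonpos_of_nonneg
          (mul_nonpos_of_nonneg_of_nonpos hrm4 (by linarith)) hs0
      have f3 : 1 * (r ^ (m - 2) * X) ≤ max (m - 1) 1 * (r ^ (m - 2) * X) :=
        mul_le_mul_of_nonneg_right hmax1 hrx
      have f4 : 1 * (r ^ m * (r ^ (m - 2) * X)) ≤ max (m - 1) 1 * (r ^ m * (r ^ (m - 2) * X)) :=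
        mul_le_mul_of_nonneg_right hmax1 (mul_nonneg hrm hrx)
      linarith


/-- For `m > 1`, the integrand `F(z) = (1+|z|^m)^{1/m}` (with `z ≠ 0` when `m < 2`)
satisfies the anisotropic Hessian bounds
`min{m−1,1}|z|^{m−2}|ξ|²/(1+|z|^m)^{2−1/m} ≤ ⟨∂_{zz}F(z)ξ,ξ⟩ ≤
 max{m−1,1}|z|^{m−2}|ξ|²/(1+|z|^m)^{1−1/m}`. -/
theorem m_area_integrand_hessian_bounds (n : ℕ) (m : ℝ) (hm : 1 < m)
    (z : EuclideanSpace ℝ (Fin n)) (hz : m < 2 → z ≠ 0) (ξ : EuclideanSpace ℝ (Fin n)) :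
    min (m - 1) 1 * ‖z‖ ^ (m - 2) * ‖ξ‖ ^ 2 / (1 + ‖z‖ ^ m) ^ (2 - 1 / m) ≤
      iteratedFDeriv ℝ 2
        (fun w : EuclideanSpace ℝ (Fin n) => (1 + ‖w‖ ^ m) ^ (1 / m)) z ![ξ, ξ] ∧
    iteratedFDeriv ℝ 2
        (fun w : EuclideanSpace ℝ (Fin n) => (1 + ‖w‖ ^ m) ^ (1 / m)) z ![ξ, ξ] ≤
      max (m - 1) 1 * ‖z‖ ^ (m - 2) * ‖ξ‖ ^ 2 / (1 + ‖z‖ ^ m) ^ (1 - 1 / m) := by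
  have hGev : (fderiv ℝ (fun w : EuclideanSpace ℝ (Fin n) => (1 + ‖w‖ ^ m) ^ (1 / m)))
      =ᶠ[𝓝 z] fun w => ((1 + ‖w‖ ^ m) ^ (1 / m - 1) * ‖w‖ ^ (m - 2)) • innerSL ℝ w := by
    rcases eq_or_ne z 0 with rfl | hz0
    · have h2m : 2 ≤ m := by
        by_contra h
        exact (hz (by linarith)) rfl
      exact Filter.Eventually.of_forall fun w => (mah_hasFDerivAt_F m hm w (Or.inr h2m)).fderiv
    · filter_upwards [eventually_ne_nhds hz0] with w hw
      exact (mah_hasFDerivAt_F m hm w (Or.inl hw)).fderiv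
  have hQ : iteratedFDeriv ℝ 2
        (fun w : EuclideanSpace ℝ (Fin n) => (1 + ‖w‖ ^ m) ^ (1 / m)) z ![ξ, ξ]
      = fderiv ℝ (fun w : EuclideanSpace ℝ (Fin n) =>
          ((1 + ‖w‖ ^ m) ^ (1 / m - 1) * ‖w‖ ^ (m - 2)) • innerSL ℝ w) z ξ ξ := by
    rw [iteratedFDeriv_two_apply, hGev.fderiv_eq]
    simp
  rw [hQ]
  rcases eq_or_ne z 0 with rfl | hz0
  · have h2m : 2 ≤ m := by
      by_contra h
      exact (hz (by linarith)) rfl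
    rcases eq_or_lt_of_le h2m with h2 | h2
    · -- m = 2
      subst h2
      rw [mah_G_two.fderiv, mah_ipm_apply, real_inner_self_eq_norm_sq]
      norm_num [norm_zero, show ((2:ℝ) - 2) = 0 by norm_num, Real.rpow_zero,
        Real.zero_rpow (by norm_num : (2:ℝ) ≠ 0), Real.one_rpow]
    · -- 2 < m
      rw [(mah_G_zero m h2).fderiv]
      have hm2 : m - 2 ≠ 0 := by linarith
      have hmne : m ≠ 0 := by positivity
      norm_num [norm_zero, Real.zero_rpow hm2, Real.zero_rpow hmne, Real.one_rpow]
  · -- z ≠ 0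
    rw [(mah_hasFDerivAt_G m hm z hz0).fderiv]
    have hrpos : 0 < ‖z‖ := norm_pos_iff.2 hz0
    have hcs : (inner ℝ z ξ : ℝ) * inner ℝ z ξ ≤ ‖z‖ ^ 2 * ‖ξ‖ ^ 2 := by
      have := real_inner_mul_inner_self_le z ξ
      rwa [real_inner_self_eq_norm_sq, real_inner_self_eq_norm_sq] at this
    obtain ⟨k1, k2⟩ := mah_key m ‖z‖ (‖ξ‖ ^ 2) ((inner ℝ z ξ : ℝ) * inner ℝ z ξ) hm hrpos
      (by positivity) (mul_self_nonneg _) hcs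
    simp only [ContinuousLinearMap.add_apply, ContinuousLinearMap.coe_smul', Pi.smul_apply,
      ContinuousLinearMap.smulRight_apply, ContinuousLinearMap.smul_apply, smul_eq_mul,
      mah_ipm_apply, innerSL_apply_apply, real_inner_self_eq_norm_sq]
    constructor
    · linarith [k1]
    · linarith [k2]
end

section
/- For the double phase integrand F(x,z) = |z|^p + a(x)|z|^q with 1 < p ≤ q and a : Ω → [0,∞), for a ball B ⊂ Ω the nonlocal ellipticity ratio satisfies R̄_F(z,B) ≤ C(p,q)(1 + ‖a‖_{L^∞(B)} |z|^{q−p}) for all |z| ≥ 1; moreover if a vanishes at some point of the closure of B, then ‖a‖_{L^∞(B)} |z|^{q−p} ≤ C'(p,q) R̄_F(z,B) for |z| ≥ 1. -/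
open Set RealInnerProductSpace

variable {E : Type*} [NormedAddCommGroup E] [InnerProductSpace ℝ E]

lemma dp_norm_rpow_eq (p : ℝ) (w : E) : ‖w‖ ^ p = (⟪w, w⟫ : ℝ) ^ (p / 2) := by
  rw [real_inner_self_eq_norm_sq, ← Real.rpow_natCast ‖w‖ 2,
    ← Real.rpow_mul (norm_nonneg w)]
  congr 1
  push_cast
  ring

lemma dp_hasFDerivAt_inner_self (w : E) :
    HasFDerivAt (fun v : E => (⟪v, v⟫ : ℝ)) ((2 : ℝ) • (innerSL ℝ w)) w := by
  have h := (hasFDerivAt_id w).inner ℝ (hasFDerivAt_id w)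
  refine h.congr_fderiv ?_
  ext ξ
  simp [fderivInnerCLM_apply, real_inner_comm, two_smul]

lemma dp_sq_rpow (s : ℝ) {w : E} : ((‖w‖ : ℝ) ^ (2:ℕ)) ^ s = ‖w‖ ^ (2 * s) := by
  rw [← Real.rpow_natCast ‖w‖ 2, ← Real.rpow_mul (norm_nonneg w)]
  norm_num

lemma dp_norm_rpow_hasFDerivAt (p : ℝ) {w : E} (hw : w ≠ 0) :
    HasFDerivAt (fun v : E => ‖v‖ ^ p) ((p * ‖w‖ ^ (p - 2)) • innerSL ℝ w) w := by
  have hg : (0 : ℝ) < ⟪w, w⟫ := by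
    rw [real_inner_self_eq_norm_sq]
    exact pow_pos (norm_pos_iff.mpr hw) 2
  have h1 : HasDerivAt (fun t : ℝ => t ^ (p / 2))
      ((p / 2) * (⟪w, w⟫ : ℝ) ^ (p / 2 - 1)) (⟪w, w⟫ : ℝ) :=
    Real.hasDerivAt_rpow_const (Or.inl hg.ne')
  have h2 := HasDerivAt.comp_hasFDerivAt_of_eq (f := fun v : E => (⟪v, v⟫ : ℝ)) w h1
    (dp_hasFDerivAt_inner_self w) rfl
  have hfun : (fun v : E => ‖v‖ ^ p) = fun v : E => (⟪v, v⟫ : ℝ) ^ (p / 2) :=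
    funext (dp_norm_rpow_eq p)
  rw [hfun]
  refine h2.congr_fderiv ?_
  rw [smul_smul]
  congr 1
  rw [real_inner_self_eq_norm_sq, dp_sq_rpow]
  have : 2 * (p / 2 - 1) = p - 2 := by ring
  rw [this]
  ring

noncomputable def dpInnerRL : E →L[ℝ] (E →L[ℝ] ℝ) :=
  LinearMap.mkContinuous
    { toFun := fun w => innerSL ℝ w
      map_add' := fun x y => by ext η; simp [inner_add_left]
      map_smul' := fun r x => by ext η; simp [inner_smul_left] }
    1 (fun w => by
      rw [one_mul]
      exact (innerSL_apply_norm (𝕜 := ℝ) w).le)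

@[simp] lemma dpInnerRL_apply (w η : E) : dpInnerRL w η = (⟪w, η⟫ : ℝ) := rfl

lemma dp_hessian_apply (p q c : ℝ) {z : E} (hz : z ≠ 0) (ξ : E) :
    iteratedFDeriv ℝ 2 (fun w : E => ‖w‖ ^ p + c * ‖w‖ ^ q) z ![ξ, ξ]
      = (p * ‖z‖ ^ (p - 2) + c * (q * ‖z‖ ^ (q - 2))) * ‖ξ‖ ^ 2
        + (p * (p - 2) * ‖z‖ ^ (p - 4) + c * (q * (q - 2) * ‖z‖ ^ (q - 4)))
          * (⟪z, ξ⟫ : ℝ) ^ 2 := by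
  set D : E → (E →L[ℝ] ℝ) :=
    fun w => (p * ‖w‖ ^ (p - 2) + c * (q * ‖w‖ ^ (q - 2))) • innerSL ℝ w with hDdef
  have hder : ∀ w : E, w ≠ 0 →
      HasFDerivAt (fun w : E => ‖w‖ ^ p + c * ‖w‖ ^ q) (D w) w := by
    intro w hw
    have h := (dp_norm_rpow_hasFDerivAt p hw).add
      ((dp_norm_rpow_hasFDerivAt q hw).const_mul c)
    refine h.congr_fderiv ?_
    rw [hDdef]
    simp only [smul_smul, add_smul]
  have hfd : fderiv ℝ (fun w : E => ‖w‖ ^ p + c * ‖w‖ ^ q) =ᶠ[nhds z] D := by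
    filter_upwards [isOpen_compl_singleton.mem_nhds
      (by simpa using hz : z ∈ ({0}ᶜ : Set E))] with w hw
    exact (hder w (by simpa using hw)).fderiv
  rw [iteratedFDeriv_two_apply, hfd.fderiv_eq]
  have hs : HasFDerivAt (fun w : E => p * ‖w‖ ^ (p - 2) + c * (q * ‖w‖ ^ (q - 2)))
      ((p * (p - 2) * ‖z‖ ^ (p - 4) + c * (q * (q - 2) * ‖z‖ ^ (q - 4))) • innerSL ℝ z)
      z := by
    have hp' := (dp_norm_rpow_hasFDerivAt (p - 2) hz).const_mul p
    have hq' := ((dp_norm_rpow_hasFDerivAt (q - 2) hz).const_mul q).const_mul c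
    have h := hp'.add hq'
    have e1 : p - 2 - 2 = p - 4 := by ring
    have e2 : q - 2 - 2 = q - 4 := by ring
    rw [e1, e2] at h
    refine h.congr_fderiv ?_
    module
  have hDz : HasFDerivAt D
      ((p * ‖z‖ ^ (p - 2) + c * (q * ‖z‖ ^ (q - 2))) • (dpInnerRL (E := E))
        + ContinuousLinearMap.smulRight
            ((p * (p - 2) * ‖z‖ ^ (p - 4) + c * (q * (q - 2) * ‖z‖ ^ (q - 4))) • innerSL ℝ z)
            (dpInnerRL z)) z :=
    hs.smul (dpInnerRL (E := E)).hasFDerivAt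
  rw [hDz.fderiv]
  simp only [ContinuousLinearMap.add_apply, ContinuousLinearMap.smul_apply,
    ContinuousLinearMap.smulRight_apply, dpInnerRL_apply, innerSL_apply_apply, smul_eq_mul,
    real_inner_self_eq_norm_sq, Matrix.cons_val_zero, Matrix.cons_val_one, Matrix.head_cons]
  ring

lemma dp_single_bound (p : ℝ) (hp : 1 < p) {r u : ℝ} (hr : 0 < r) (hu0 : 0 ≤ u)
    (hu : u ≤ r ^ (2:ℕ)) :
    p * min 1 (p - 1) * r ^ (p - 2) ≤ p * r ^ (p - 2) + p * (p - 2) * r ^ (p - 4) * u ∧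
      p * r ^ (p - 2) + p * (p - 2) * r ^ (p - 4) * u ≤ p * max 1 (p - 1) * r ^ (p - 2) := by
  have hv0 : 0 ≤ r ^ (p - 4) * u := mul_nonneg (Real.rpow_nonneg hr.le _) hu0
  have hv1 : r ^ (p - 4) * u ≤ r ^ (p - 2) := by
    calc r ^ (p - 4) * u ≤ r ^ (p - 4) * r ^ (2:ℕ) :=
          mul_le_mul_of_nonneg_left hu (Real.rpow_nonneg hr.le _)
      _ = r ^ (p - 2) := by
          rw [← Real.rpow_natCast r 2, ← Real.rpow_add hr]
          congr 1
          push_cast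
          ring
  have hrp : 0 < r ^ (p - 2) := Real.rpow_pos_of_pos hr _
  have hp0 : (0:ℝ) < p := by linarith
  rcases le_total p 2 with h | h
  · rw [min_eq_right (by linarith), max_eq_left (by linarith)]
    constructor <;> nlinarith [mul_nonneg hp0.le hv0, mul_nonneg hp0.le (sub_nonneg.mpr hv1)]
  · rw [min_eq_left (by linarith), max_eq_right (by linarith)]
    constructor <;> nlinarith [mul_nonneg hp0.le hv0, mul_nonneg hp0.le (sub_nonneg.mpr hv1)]

lemma dp_hessian_bounds (p q c : ℝ) (hp : 1 < p) (hq : 1 < q) (hc : 0 ≤ c) {z : E}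
    (hz : 1 ≤ ‖z‖) {ξ : E} (hξ : ‖ξ‖ = 1) :
    p * min 1 (p - 1) * ‖z‖ ^ (p - 2) + c * (q * min 1 (q - 1) * ‖z‖ ^ (q - 2))
        ≤ iteratedFDeriv ℝ 2 (fun w : E => ‖w‖ ^ p + c * ‖w‖ ^ q) z ![ξ, ξ] ∧
      iteratedFDeriv ℝ 2 (fun w : E => ‖w‖ ^ p + c * ‖w‖ ^ q) z ![ξ, ξ]
        ≤ p * max 1 (p - 1) * ‖z‖ ^ (p - 2) + c * (q * max 1 (q - 1) * ‖z‖ ^ (q - 2)) := by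
  have hz0 : (0:ℝ) < ‖z‖ := lt_of_lt_of_le one_pos hz
  have hzne : z ≠ 0 := norm_pos_iff.mp hz0
  rw [dp_hessian_apply p q c hzne ξ, hξ]
  set u := (⟪z, ξ⟫ : ℝ) ^ 2 with hu_def
  have hu0 : 0 ≤ u := sq_nonneg _
  have hu : u ≤ ‖z‖ ^ (2:ℕ) := by
    have h1 := abs_real_inner_le_norm z ξ
    rw [hξ, mul_one] at h1
    calc u = |(⟪z, ξ⟫ : ℝ)| ^ 2 := (sq_abs _).symm
      _ ≤ ‖z‖ ^ 2 := pow_le_pow_left₀ (abs_nonneg _) h1 2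
  have B1 := dp_single_bound p hp hz0 hu0 hu
  have B2 := dp_single_bound q hq hz0 hu0 hu
  have h2l := mul_le_mul_of_nonneg_left B2.1 hc
  have h2u := mul_le_mul_of_nonneg_left B2.2 hc
  constructor
  · calc p * min 1 (p - 1) * ‖z‖ ^ (p - 2) + c * (q * min 1 (q - 1) * ‖z‖ ^ (q - 2))
        ≤ (p * ‖z‖ ^ (p - 2) + p * (p - 2) * ‖z‖ ^ (p - 4) * u)
          + c * (q * ‖z‖ ^ (q - 2) + q * (q - 2) * ‖z‖ ^ (q - 4) * u) := by
          linarith [B1.1]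
      _ = (p * ‖z‖ ^ (p - 2) + c * (q * ‖z‖ ^ (q - 2))) * 1 ^ 2
          + (p * (p - 2) * ‖z‖ ^ (p - 4) + c * (q * (q - 2) * ‖z‖ ^ (q - 4))) * u := by
          ring
  · calc (p * ‖z‖ ^ (p - 2) + c * (q * ‖z‖ ^ (q - 2))) * 1 ^ 2
          + (p * (p - 2) * ‖z‖ ^ (p - 4) + c * (q * (q - 2) * ‖z‖ ^ (q - 4))) * u
        = (p * ‖z‖ ^ (p - 2) + p * (p - 2) * ‖z‖ ^ (p - 4) * u)
          + c * (q * ‖z‖ ^ (q - 2) + q * (q - 2) * ‖z‖ ^ (q - 4) * u) := by ring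
      _ ≤ p * max 1 (p - 1) * ‖z‖ ^ (p - 2) + c * (q * max 1 (q - 1) * ‖z‖ ^ (q - 2)) := by
          linarith [B1.2]
set_option maxHeartbeats 1000000 in
/-- For the double phase integrand `F(x,z) = |z|^p + a(x)|z|^q`, `1 < p ≤ q`, on a ball
`B ⊆ Ω`: the nonlocal ellipticity ratio `R̄_F(z,B)` (quotient of the sup over `x ∈ B` of the
highest eigenvalue of `∂_{zz}F(x,z)` by the inf over `x ∈ B` of the lowest eigenvalue,
eigenvalues being expressed through the Hessian quadratic form on the unit sphere)
satisfies `R̄_F(z,B) ≤ C(1 + ‖a‖_{L^∞(B)}|z|^{q−p})` for `|z| ≥ 1`; and if `a` vanishes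
somewhere on `closure B`, then `‖a‖_{L^∞(B)}|z|^{q−p} ≤ C' R̄_F(z,B)` for `|z| ≥ 1`. -/
theorem double_phase_nonlocal_ellipticity_ratio (n : ℕ) (hn : 0 < n)
    (p q : ℝ) (hp : 1 < p) (hpq : p ≤ q)
    (Ω : Set (EuclideanSpace ℝ (Fin n))) (a : EuclideanSpace ℝ (Fin n) → ℝ)
    (ha : ∀ x, 0 ≤ a x)
    (x₀ : EuclideanSpace ℝ (Fin n)) (ρ : ℝ) (hρ : 0 < ρ)
    (hB : Metric.ball x₀ ρ ⊆ Ω)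
    (haC : ContinuousOn a (closure (Metric.ball x₀ ρ))) :
    let B : Set (EuclideanSpace ℝ (Fin n)) := Metric.ball x₀ ρ
    let Q : EuclideanSpace ℝ (Fin n) → EuclideanSpace ℝ (Fin n) →
        EuclideanSpace ℝ (Fin n) → ℝ := fun x z ξ =>
      iteratedFDeriv ℝ 2
        (fun w : EuclideanSpace ℝ (Fin n) => ‖w‖ ^ p + a x * ‖w‖ ^ q) z ![ξ, ξ]
    let Rbar : EuclideanSpace ℝ (Fin n) → ℝ := fun z =>
      sSup {t | ∃ x ∈ B, ∃ ξ : EuclideanSpace ℝ (Fin n), ‖ξ‖ = 1 ∧ t = Q x z ξ} /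
        sInf {t | ∃ x ∈ B, ∃ ξ : EuclideanSpace ℝ (Fin n), ‖ξ‖ = 1 ∧ t = Q x z ξ}
    let Na : ℝ := sSup (a '' B)
    (∃ C : ℝ, 0 < C ∧ ∀ z : EuclideanSpace ℝ (Fin n), 1 ≤ ‖z‖ →
        Rbar z ≤ C * (1 + Na * ‖z‖ ^ (q - p))) ∧
      ((∃ x ∈ closure B, a x = 0) →
        ∃ C' : ℝ, 0 < C' ∧ ∀ z : EuclideanSpace ℝ (Fin n), 1 ≤ ‖z‖ →
          Na * ‖z‖ ^ (q - p) ≤ C' * Rbar z) := by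
  intro B Q Rbar Na
  have hq : 1 < q := lt_of_lt_of_le hp hpq
  set Pm := p * min 1 (p - 1) with hPm_def
  set PM := p * max 1 (p - 1) with hPM_def
  set Qm := q * min 1 (q - 1) with hQm_def
  set QM := q * max 1 (q - 1) with hQM_def
  clear_value Pm PM Qm QM
  have hPm0 : 0 < Pm := by
    rw [hPm_def]; exact mul_pos (by linarith) (lt_min one_pos (by linarith))
  have hPM0 : 0 < PM := by
    rw [hPM_def]; exact mul_pos (by linarith) (lt_of_lt_of_le one_pos (le_max_left _ _))
  have hQm0 : 0 < Qm := by
    rw [hQm_def]; exact mul_pos (by linarith) (lt_min one_pos (by linarith))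
  have hQM0 : 0 < QM := by
    rw [hQM_def]; exact mul_pos (by linarith) (lt_of_lt_of_le one_pos (le_max_left _ _))
  have hx₀B : x₀ ∈ B := Metric.mem_ball_self hρ
  have hKcomp : IsCompact (closure B) :=
    Metric.isCompact_of_isClosed_isBounded isClosed_closure Metric.isBounded_ball.closure
  have hbddA : BddAbove (a '' B) :=
    ((hKcomp.image_of_continuousOn haC).bddAbove).mono (image_mono subset_closure)
  have hNa_ub : ∀ x ∈ B, a x ≤ Na := fun x hx => le_csSup hbddA ⟨x, hx, rfl⟩
  have hNa0 : 0 ≤ Na := le_trans (ha x₀) (hNa_ub x₀ hx₀B)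
  set ξ₀ : EuclideanSpace ℝ (Fin n) := EuclideanSpace.single (⟨0, hn⟩ : Fin n) (1 : ℝ)
    with hξ₀_def
  have hξ₀ : ‖ξ₀‖ = 1 := by
    rw [hξ₀_def, EuclideanSpace.norm_single]
    simp
  have key : ∀ z : EuclideanSpace ℝ (Fin n), 1 ≤ ‖z‖ →
      Pm * ‖z‖ ^ (p - 2) ≤
        sInf {t | ∃ x ∈ B, ∃ ξ : EuclideanSpace ℝ (Fin n), ‖ξ‖ = 1 ∧ t = Q x z ξ} ∧
      sSup {t | ∃ x ∈ B, ∃ ξ : EuclideanSpace ℝ (Fin n), ‖ξ‖ = 1 ∧ t = Q x z ξ} ≤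
        PM * ‖z‖ ^ (p - 2) + Na * (QM * ‖z‖ ^ (q - 2)) ∧
      (∀ x ∈ B, a x * (Qm * ‖z‖ ^ (q - 2)) ≤
        sSup {t | ∃ x ∈ B, ∃ ξ : EuclideanSpace ℝ (Fin n), ‖ξ‖ = 1 ∧ t = Q x z ξ}) ∧
      Pm * ‖z‖ ^ (p - 2) ≤
        sSup {t | ∃ x ∈ B, ∃ ξ : EuclideanSpace ℝ (Fin n), ‖ξ‖ = 1 ∧ t = Q x z ξ} ∧
      BddBelow {t | ∃ x ∈ B, ∃ ξ : EuclideanSpace ℝ (Fin n), ‖ξ‖ = 1 ∧ t = Q x z ξ} := by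
    intro z hz
    have hz0 : (0 : ℝ) < ‖z‖ := lt_of_lt_of_le one_pos hz
    have hrq0 : (0 : ℝ) ≤ ‖z‖ ^ (q - 2) := Real.rpow_nonneg hz0.le _
    have hmem : ∀ x ∈ B, Q x z ξ₀ ∈
        {t | ∃ x ∈ B, ∃ ξ : EuclideanSpace ℝ (Fin n), ‖ξ‖ = 1 ∧ t = Q x z ξ} :=
      fun x hx => ⟨x, hx, ξ₀, hξ₀, rfl⟩
    have hbound : ∀ t ∈ {t | ∃ x ∈ B, ∃ ξ : EuclideanSpace ℝ (Fin n), ‖ξ‖ = 1 ∧ t = Q x z ξ},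
        Pm * ‖z‖ ^ (p - 2) ≤ t ∧ t ≤ PM * ‖z‖ ^ (p - 2) + Na * (QM * ‖z‖ ^ (q - 2)) := by
      rintro t ⟨x, hx, ξ, hξ, rfl⟩
      have hb := dp_hessian_bounds p q (a x) hp hq (ha x) hz hξ
      rw [← hPm_def, ← hPM_def, ← hQm_def, ← hQM_def] at hb
      have hQeq : Q x z ξ = iteratedFDeriv ℝ 2
          (fun w : EuclideanSpace ℝ (Fin n) => ‖w‖ ^ p + a x * ‖w‖ ^ q) z ![ξ, ξ] := rfl
      rw [hQeq]
      constructor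
      · have h0 : 0 ≤ a x * (Qm * ‖z‖ ^ (q - 2)) :=
          mul_nonneg (ha x) (mul_nonneg hQm0.le hrq0)
        linarith [hb.1]
      · have h1 : a x * (QM * ‖z‖ ^ (q - 2)) ≤ Na * (QM * ‖z‖ ^ (q - 2)) :=
          mul_le_mul_of_nonneg_right (hNa_ub x hx) (mul_nonneg hQM0.le hrq0)
        linarith [hb.2]
    have hne : {t | ∃ x ∈ B, ∃ ξ : EuclideanSpace ℝ (Fin n), ‖ξ‖ = 1 ∧ t = Q x z ξ}.Nonempty :=
      ⟨Q x₀ z ξ₀, hmem x₀ hx₀B⟩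
    have hbdd : BddAbove {t | ∃ x ∈ B, ∃ ξ : EuclideanSpace ℝ (Fin n), ‖ξ‖ = 1 ∧ t = Q x z ξ} :=
      ⟨_, fun t ht => (hbound t ht).2⟩
    have hbddb : BddBelow {t | ∃ x ∈ B, ∃ ξ : EuclideanSpace ℝ (Fin n), ‖ξ‖ = 1 ∧ t = Q x z ξ} :=
      ⟨_, fun t ht => (hbound t ht).1⟩
    refine ⟨le_csInf hne fun t ht => (hbound t ht).1,
      csSup_le hne fun t ht => (hbound t ht).2, fun x hx => ?_,
      le_trans (hbound _ (hmem x₀ hx₀B)).1 (le_csSup hbdd (hmem x₀ hx₀B)), hbddb⟩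
    · have hb := dp_hessian_bounds p q (a x) hp hq (ha x) hz hξ₀
      rw [← hPm_def, ← hPM_def, ← hQm_def, ← hQM_def] at hb
      have hQeq : Q x z ξ₀ = iteratedFDeriv ℝ 2
          (fun w : EuclideanSpace ℝ (Fin n) => ‖w‖ ^ p + a x * ‖w‖ ^ q) z ![ξ₀, ξ₀] := rfl
      have h1 : a x * (Qm * ‖z‖ ^ (q - 2)) ≤ Q x z ξ₀ := by
        rw [hQeq]
        have h0 : 0 ≤ Pm * ‖z‖ ^ (p - 2) :=
          mul_nonneg hPm0.le (Real.rpow_nonneg hz0.le _)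
        linarith [hb.1]
      exact le_trans h1 (le_csSup hbdd (hmem x hx))
  constructor
  · refine ⟨(PM + QM) / Pm, div_pos (by linarith) hPm0, fun z hz => ?_⟩
    obtain ⟨K1, K2, K3, K4, K5⟩ := key z hz
    have hz0 : (0 : ℝ) < ‖z‖ := lt_of_lt_of_le one_pos hz
    have hrp : 0 < ‖z‖ ^ (p - 2) := Real.rpow_pos_of_pos hz0 _
    have hw0 : (0 : ℝ) ≤ ‖z‖ ^ (q - p) := Real.rpow_nonneg hz0.le _
    have hrq_eq : ‖z‖ ^ (q - 2) = ‖z‖ ^ (q - p) * ‖z‖ ^ (p - 2) := by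
      rw [← Real.rpow_add hz0]
      congr 1
      ring
    show sSup {t | ∃ x ∈ B, ∃ ξ : EuclideanSpace ℝ (Fin n), ‖ξ‖ = 1 ∧ t = Q x z ξ} /
        sInf {t | ∃ x ∈ B, ∃ ξ : EuclideanSpace ℝ (Fin n), ‖ξ‖ = 1 ∧ t = Q x z ξ} ≤
        (PM + QM) / Pm * (1 + Na * ‖z‖ ^ (q - p))
    set SUP := sSup {t | ∃ x ∈ B, ∃ ξ : EuclideanSpace ℝ (Fin n), ‖ξ‖ = 1 ∧ t = Q x z ξ} with hSUP_def
    set INF := sInf {t | ∃ x ∈ B, ∃ ξ : EuclideanSpace ℝ (Fin n), ‖ξ‖ = 1 ∧ t = Q x z ξ} with hINF_def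
    clear_value SUP INF
    have hNaQMrq : 0 ≤ Na * (QM * ‖z‖ ^ (q - 2)) :=
      mul_nonneg hNa0 (mul_nonneg hQM0.le (Real.rpow_nonneg hz0.le _))
    calc SUP / INF
        ≤ (PM * ‖z‖ ^ (p - 2) + Na * (QM * ‖z‖ ^ (q - 2))) / (Pm * ‖z‖ ^ (p - 2)) :=
          div_le_div₀ (by nlinarith [mul_pos hPM0 hrp]) K2 (by positivity) K1
      _ = ((PM + Na * (QM * ‖z‖ ^ (q - p))) * ‖z‖ ^ (p - 2)) / (Pm * ‖z‖ ^ (p - 2)) := by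
          rw [hrq_eq]; ring_nf
      _ = (PM + Na * (QM * ‖z‖ ^ (q - p))) / Pm := by
          rw [mul_div_mul_right _ _ (ne_of_gt hrp)]
      _ ≤ ((PM + QM) * (1 + Na * ‖z‖ ^ (q - p))) / Pm := by
          have hNaw : 0 ≤ Na * ‖z‖ ^ (q - p) := mul_nonneg hNa0 hw0
          apply div_le_div₀ (by nlinarith) (by nlinarith [mul_nonneg hNaw hQM0.le]) hPm0 le_rfl
      _ = (PM + QM) / Pm * (1 + Na * ‖z‖ ^ (q - p)) := by
          rw [div_mul_eq_mul_div]
  · rintro ⟨xs, hxs, hxs0⟩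
    have hsmall : ∀ δ : ℝ, 0 < δ → ∃ x ∈ B, a x < δ := by
      intro δ hδ
      have hct : ContinuousWithinAt a (closure B) xs := haC xs hxs
      have hV : a ⁻¹' (Iio δ) ∈ nhdsWithin xs (closure B) :=
        hct.preimage_mem_nhdsWithin (by rw [hxs0]; exact Iio_mem_nhds hδ)
      rw [mem_nhdsWithin] at hV
      obtain ⟨U, hUo, hxU, hUsub⟩ := hV
      obtain ⟨x, hxU', hxB⟩ := _root_.mem_closure_iff.mp hxs U hUo hxU
      exact ⟨x, hxB, hUsub ⟨hxU', subset_closure hxB⟩⟩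
    refine ⟨PM / Qm, div_pos hPM0 hQm0, fun z hz => ?_⟩
    obtain ⟨K1, K2, K3, K4, K5⟩ := key z hz
    have hz0 : (0 : ℝ) < ‖z‖ := lt_of_lt_of_le one_pos hz
    have hrp : 0 < ‖z‖ ^ (p - 2) := Real.rpow_pos_of_pos hz0 _
    have hrq : 0 < ‖z‖ ^ (q - 2) := Real.rpow_pos_of_pos hz0 _
    have hInf_pos : 0 < sInf {t | ∃ x ∈ B, ∃ ξ : EuclideanSpace ℝ (Fin n), ‖ξ‖ = 1 ∧ t = Q x z ξ} :=
      lt_of_lt_of_le (by positivity) K1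
    have hSup_pos : 0 < sSup {t | ∃ x ∈ B, ∃ ξ : EuclideanSpace ℝ (Fin n), ‖ξ‖ = 1 ∧ t = Q x z ξ} :=
      lt_of_lt_of_le (by positivity) K4
    have hInf_le : sInf {t | ∃ x ∈ B, ∃ ξ : EuclideanSpace ℝ (Fin n), ‖ξ‖ = 1 ∧ t = Q x z ξ} ≤
        PM * ‖z‖ ^ (p - 2) := by
      apply le_of_forall_pos_le_add
      intro ε hε
      obtain ⟨x, hxB, hax⟩ := hsmall (ε / (QM * ‖z‖ ^ (q - 2))) (by positivity)
      have hmemx : Q x z ξ₀ ∈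
          {t | ∃ x ∈ B, ∃ ξ : EuclideanSpace ℝ (Fin n), ‖ξ‖ = 1 ∧ t = Q x z ξ} :=
        ⟨x, hxB, ξ₀, hξ₀, rfl⟩
      have hb := dp_hessian_bounds p q (a x) hp hq (ha x) hz hξ₀
      rw [← hPm_def, ← hPM_def, ← hQm_def, ← hQM_def] at hb
      have hle := csInf_le K5 hmemx
      have hQeq : Q x z ξ₀ = iteratedFDeriv ℝ 2
          (fun w : EuclideanSpace ℝ (Fin n) => ‖w‖ ^ p + a x * ‖w‖ ^ q) z ![ξ₀, ξ₀] := rfl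
      rw [hQeq] at hle
      have hεb : a x * (QM * ‖z‖ ^ (q - 2)) < ε :=
        (lt_div_iff₀ (by positivity)).mp hax
      linarith [hb.2]
    have hNa_rq : Na * (Qm * ‖z‖ ^ (q - 2)) ≤
        sSup {t | ∃ x ∈ B, ∃ ξ : EuclideanSpace ℝ (Fin n), ‖ξ‖ = 1 ∧ t = Q x z ξ} := by
      have hQmrq : 0 < Qm * ‖z‖ ^ (q - 2) := by positivity
      have hNa_le : Na ≤
          sSup {t | ∃ x ∈ B, ∃ ξ : EuclideanSpace ℝ (Fin n), ‖ξ‖ = 1 ∧ t = Q x z ξ} /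
            (Qm * ‖z‖ ^ (q - 2)) := by
        apply csSup_le (Set.Nonempty.image a ⟨x₀, hx₀B⟩)
        rintro y ⟨x, hx, rfl⟩
        exact (le_div_iff₀ hQmrq).mpr (K3 x hx)
      exact (le_div_iff₀ hQmrq).mp hNa_le
    have hw_eq : ‖z‖ ^ (q - p) = ‖z‖ ^ (q - 2) / ‖z‖ ^ (p - 2) := by
      rw [← Real.rpow_sub hz0]
      congr 1
      ring
    show Na * ‖z‖ ^ (q - p) ≤ PM / Qm *
        (sSup {t | ∃ x ∈ B, ∃ ξ : EuclideanSpace ℝ (Fin n), ‖ξ‖ = 1 ∧ t = Q x z ξ} /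
          sInf {t | ∃ x ∈ B, ∃ ξ : EuclideanSpace ℝ (Fin n), ‖ξ‖ = 1 ∧ t = Q x z ξ})
    set SUP := sSup {t | ∃ x ∈ B, ∃ ξ : EuclideanSpace ℝ (Fin n), ‖ξ‖ = 1 ∧ t = Q x z ξ} with hSUP_def
    set INF := sInf {t | ∃ x ∈ B, ∃ ξ : EuclideanSpace ℝ (Fin n), ‖ξ‖ = 1 ∧ t = Q x z ξ} with hINF_def
    clear_value SUP INF
    have hQm' : Qm ≠ 0 := ne_of_gt hQm0
    have hPM' : PM ≠ 0 := ne_of_gt hPM0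
    have hInf' : INF ≠ 0 := ne_of_gt hInf_pos
    calc Na * ‖z‖ ^ (q - p) = (Na * ‖z‖ ^ (q - 2)) / ‖z‖ ^ (p - 2) := by
          rw [hw_eq, mul_div_assoc]
      _ ≤ (SUP / Qm) / (INF / PM) := by
          apply div_le_div₀ (div_pos hSup_pos hQm0).le ?_ (div_pos hInf_pos hPM0) ?_
          · rw [le_div_iff₀ hQm0]
            nlinarith [hNa_rq]
          · rw [div_le_iff₀ hPM0]
            nlinarith [hInf_le]
      _ = PM / Qm * (SUP / INF) := by
          field_simp
end
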